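/- Let H_m be a nonnegative homogeneous polynomial of degree m on ℝⁿ satisfying Δ^{⌊(n+1)/2⌋} H_m = 0. Then m ≤ n-1. -/

import Mathlib

open MeasureTheory Filter Real Set Metric

noncomputable section

abbrev Eucl (n : ℕ) := EuclideanSpace ℝ (Fin n)

/-- The Euclidean Laplacian. -/
noncomputable def lap {n : ℕ} (f : Eucl n → ℝ) (x : Eucl n) : ℝ :=
  ∑ i : Fin n, iteratedFDeriv ℝ 2 f x ![EuclideanSpace.single i 1, EuclideanSpace.single i 1]

noncomputable def negLap {n : ℕ} (f : Eucl n → ℝ) : Eucl n → ℝ := fun x => -(lap f x)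

/-- Half Laplacian `(-Δ)^(1/2)` via principal value. -/
noncomputable def halfLap {n : ℕ} (f : Eucl n → ℝ) (x : Eucl n) : ℝ :=
  limUnder (nhdsWithin (0:ℝ) (Ioi 0)) fun ε =>
    (Real.Gamma (((n:ℝ)+1)/2) / Real.pi ^ (((n:ℝ)+1)/2)) *
      ∫ y in {y : Eucl n | ε ≤ dist x y}, (f x - f y) / dist x y ^ (n+1)

/-- `(-Δ)^(m/2)`, defined for odd `m` via the half Laplacian. -/
noncomputable def fracLapPow {n : ℕ} (m : ℕ) (f : Eucl n → ℝ) : Eucl n → ℝ :=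
  if Even m then negLap^[m/2] f else halfLap (negLap^[m/2] f)

/-- Volume of the standard round sphere `S^n`. -/
noncomputable def sphereVol (n : ℕ) : ℝ :=
  2 * Real.pi ^ (((n:ℝ)+1)/2) / Real.Gamma (((n:ℝ)+1)/2)

/-- The logarithmic potential `𝓛(f)`. -/
noncomputable def logPot (n : ℕ) (f : Eucl n → ℝ) (x : Eucl n) : ℝ :=
  (2 / (((n-1).factorial : ℝ) * sphereVol n)) * ∫ y, Real.log (‖y‖ / ‖x - y‖) * f y

/-- Completeness of the conformal metric `e^{2u}|dx|^2`: every `C^1` curve going off to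
infinity has infinite length. -/
def ConfComplete {n : ℕ} (u : Eucl n → ℝ) : Prop :=
  ∀ γ : ℝ → Eucl n, ContDiff ℝ 1 γ →
    Tendsto (fun t => ‖γ t‖) atTop atTop →
    (∫⁻ t in Set.Ici (0:ℝ), ENNReal.ofReal (Real.exp (u (γ t)) * ‖deriv γ t‖)) = ⊤

/-- `φ` is (given by) a polynomial of total degree at most `D`. -/
def IsPolyDeg {n : ℕ} (φ : Eucl n → ℝ) (D : ℕ) : Prop :=
  ∃ p : MvPolynomial (Fin n) ℝ, p.totalDegree ≤ D ∧
    ∀ x : Eucl n, φ x = MvPolynomial.eval (fun i => x i) p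

section Aux
open MvPolynomial

noncomputable def Mo (j : ℕ) : ℝ := ∫ t : ℝ, t ^ j * Real.exp (-t ^ 2)

lemma intMo (j : ℕ) : Integrable fun t : ℝ => t ^ j * Real.exp (-t ^ 2) := by
  have hj : (-1 : ℝ) < (j : ℝ) := lt_of_lt_of_le (by norm_num) (Nat.cast_nonneg j)
  have h := integrable_rpow_mul_exp_neg_mul_sq (b := 1) one_pos hj
  simpa [Real.rpow_natCast, neg_mul, one_mul] using h

lemma Mo_odd {j : ℕ} (hj : Odd j) : Mo j = 0 := by
  have A := integral_neg_eq_self (fun t : ℝ => t ^ j * Real.exp (-t ^ 2)) volume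
  have B : -Mo j = Mo j := by
    simpa [Mo, hj.neg_pow, neg_sq, integral_neg] using A
  linarith

lemma Mo_rec (j : ℕ) : ((j : ℝ) + 1) * Mo j = 2 * Mo (j + 2) := by
  have hderiv : ∀ x : ℝ, HasDerivAt (fun t : ℝ => t ^ (j + 1) * Real.exp (-t ^ 2))
      (((j : ℝ) + 1) * (x ^ j * Real.exp (-x ^ 2)) - 2 * (x ^ (j + 2) * Real.exp (-x ^ 2))) x := by
    intro x
    have h1 : HasDerivAt (fun t : ℝ => t ^ (j + 1)) (((j : ℝ) + 1) * x ^ j) x := by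
      simpa using hasDerivAt_pow (j + 1) x
    have h3 : HasDerivAt (fun t : ℝ => -t ^ 2) (-(2 * x)) x := by
      simpa using (hasDerivAt_pow 2 x).fun_neg
    have h2 := h3.exp
    have := h1.fun_mul h2
    refine this.congr_deriv ?_
    ring
  have h0 : ∫ x : ℝ, (((j : ℝ) + 1) * (x ^ j * Real.exp (-x ^ 2)) - 2 * (x ^ (j + 2) * Real.exp (-x ^ 2))) = 0 := by
    apply integral_eq_zero_of_hasDerivAt_of_integrable hderiv
    · exact ((intMo j).const_mul _).sub ((intMo (j + 2)).const_mul _)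
    · exact intMo (j + 1)
  rw [integral_sub ((intMo j).const_mul _) ((intMo (j + 2)).const_mul _),
    MeasureTheory.integral_const_mul, MeasureTheory.integral_const_mul] at h0
  have e1 : Mo j = ∫ t : ℝ, t ^ j * Real.exp (-t ^ 2) := rfl
  have e2 : Mo (j + 2) = ∫ t : ℝ, t ^ (j + 2) * Real.exp (-t ^ 2) := rfl
  rw [e1, e2]; linarith

lemma Mo_key (a : ℕ) : (a : ℝ) * ((a - 1 : ℕ) : ℝ) * Mo (a - 2) = 2 * ((a : ℝ) * Mo a) := by
  match a with
  | 0 => simp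
  | 1 =>
    have h1 : Mo 1 = 0 := Mo_odd odd_one
    simp [h1]
  | (a + 2) =>
    have h := Mo_rec a
    have e1 : a + 2 - 1 = a + 1 := rfl
    have e2 : a + 2 - 2 = a := rfl
    rw [e1, e2]
    push_cast
    linear_combination ((a : ℝ) + 2) * h

open MvPolynomial

variable {n : ℕ}

noncomputable def Efun (P : MvPolynomial (Fin n) ℝ) : ℝ :=
  ∫ y : Fin n → ℝ, MvPolynomial.eval y P * ∏ i, Real.exp (-(y i) ^ 2)

lemma key_mono (d : Fin n →₀ ℕ) (c : ℝ) :
    (fun y : Fin n → ℝ => eval y (monomial d c) * ∏ i, Real.exp (-(y i) ^ 2))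
      = fun y => c * ∏ i, (y i ^ d i * Real.exp (-(y i) ^ 2)) := by
  funext y
  rw [eval_monomial, Finsupp.prod_fintype _ _ (fun i => pow_zero _), Finset.prod_mul_distrib]
  ring

lemma intP (P : MvPolynomial (Fin n) ℝ) :
    Integrable (fun y : Fin n → ℝ => eval y P * ∏ i, Real.exp (-(y i) ^ 2)) := by
  induction P using MvPolynomial.induction_on' with
  | monomial d c =>
    rw [key_mono]
    exact (Integrable.fintype_prod (f := fun i (t : ℝ) => t ^ d i * Real.exp (-t ^ 2))
      (fun i => intMo (d i))).const_mul c
  | add p q hp hq =>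
    simpa [map_add, add_mul] using hp.fun_add hq

lemma Efun_add (p q : MvPolynomial (Fin n) ℝ) : Efun (p + q) = Efun p + Efun q := by
  unfold Efun
  simp_rw [map_add, add_mul]
  exact integral_add (intP p) (intP q)

lemma Efun_zero : Efun (0 : MvPolynomial (Fin n) ℝ) = 0 := by
  simp [Efun]

lemma Efun_sum {ι : Type*} (s : Finset ι) (f : ι → MvPolynomial (Fin n) ℝ) :
    Efun (∑ i ∈ s, f i) = ∑ i ∈ s, Efun (f i) := by
  induction s using Finset.cons_induction with
  | empty => simp [Efun_zero]
  | cons a s ha ih => rw [Finset.sum_cons, Efun_add, ih, Finset.sum_cons]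

lemma Efun_monomial (d : Fin n →₀ ℕ) (c : ℝ) :
    Efun (monomial d c) = c * ∏ i, Mo (d i) := by
  unfold Efun
  rw [key_mono, MeasureTheory.integral_const_mul, MeasureTheory.volume_pi,
    MeasureTheory.integral_fintype_prod_eq_prod
      (f := fun i (t : ℝ) => t ^ d i * Real.exp (-t ^ 2))]
  rfl

noncomputable def lapP (P : MvPolynomial (Fin n) ℝ) : MvPolynomial (Fin n) ℝ :=
  ∑ i : Fin n, pderiv i (pderiv i P)

lemma degree_eq_sum_univ (d : Fin n →₀ ℕ) : Finsupp.degree d = ∑ i : Fin n, d i :=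
  Finset.sum_subset (Finset.subset_univ _) fun i _ hi => Finsupp.notMem_support_iff.mp hi

lemma homog_degree {P : MvPolynomial (Fin n) ℝ} {m : ℕ} (h : P.IsHomogeneous m)
    {d : Fin n →₀ ℕ} (hd : d ∈ P.support) : Finsupp.degree d = m := by
  rw [Finsupp.degree_eq_weight_one]
  exact h (mem_support_iff.mp hd)

lemma Efun_dd_monomial (d : Fin n →₀ ℕ) (c : ℝ) (i : Fin n) :
    Efun (pderiv i (pderiv i (monomial d c))) = 2 * (d i : ℝ) * Efun (monomial d c) := by
  rw [pderiv_monomial, pderiv_monomial, Efun_monomial, Efun_monomial]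
  have hsub : ∀ j, j ≠ i → (d - Finsupp.single i 1 - Finsupp.single i 1 : Fin n →₀ ℕ) j = d j := by
    intro j hj
    simp [Finsupp.tsub_apply, Finsupp.single_apply, (Ne.symm hj)]
  have hei : (d - Finsupp.single i 1 - Finsupp.single i 1 : Fin n →₀ ℕ) i = d i - 2 := by
    simp only [Finsupp.tsub_apply, Finsupp.single_eq_same]
    omega
  have hci : (d - Finsupp.single i 1 : Fin n →₀ ℕ) i = d i - 1 := by
    simp [Finsupp.tsub_apply, Finsupp.single_eq_same]
  rw [← Finset.mul_prod_erase Finset.univ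
      (fun j => Mo ((d - Finsupp.single i 1 - Finsupp.single i 1 : Fin n →₀ ℕ) j)) (Finset.mem_univ i),
    ← Finset.mul_prod_erase Finset.univ (fun j => Mo (d j)) (Finset.mem_univ i)]
  have hprod : ∏ j ∈ Finset.univ.erase i, Mo ((d - Finsupp.single i 1 - Finsupp.single i 1 : Fin n →₀ ℕ) j)
      = ∏ j ∈ Finset.univ.erase i, Mo (d j) :=
    Finset.prod_congr rfl fun j hj => by rw [hsub j (Finset.ne_of_mem_erase hj)]
  rw [hprod, hei, hci]
  linear_combination (c * ∏ j ∈ Finset.univ.erase i, Mo (d j)) * Mo_key (d i)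

lemma lapP_sum {ι : Type*} (s : Finset ι) (f : ι → MvPolynomial (Fin n) ℝ) :
    lapP (∑ j ∈ s, f j) = ∑ j ∈ s, lapP (f j) := by
  unfold lapP
  simp_rw [map_sum]
  exact Finset.sum_comm

lemma Efun_lapP_of_homog {P : MvPolynomial (Fin n) ℝ} {m : ℕ} (h : P.IsHomogeneous m) :
    Efun (lapP P) = 2 * (m : ℝ) * Efun P := by
  conv_lhs => rw [← P.support_sum_monomial_coeff]
  conv_rhs => rw [← P.support_sum_monomial_coeff]
  rw [lapP_sum, Efun_sum, Efun_sum, Finset.mul_sum]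
  refine Finset.sum_congr rfl fun d hd => ?_
  have hdeg : ∑ i, ((d i : ℝ)) = (m : ℝ) := by
    have h1 : Finsupp.degree d = m := homog_degree h hd
    rw [← h1, degree_eq_sum_univ]
    push_cast
    rfl
  have : lapP (monomial d (coeff d P)) = ∑ i : Fin n, pderiv i (pderiv i (monomial d (coeff d P))) := rfl
  rw [this, Efun_sum]
  simp_rw [Efun_dd_monomial]
  rw [← Finset.sum_mul, ← Finset.mul_sum, hdeg]

lemma degree_sub_single (d : Fin n →₀ ℕ) (i : Fin n) (hi : d i ≠ 0) :
    Finsupp.degree (d - Finsupp.single i 1) = Finsupp.degree d - 1 := by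
  rw [degree_eq_sum_univ, degree_eq_sum_univ,
    ← Finset.add_sum_erase _ _ (Finset.mem_univ i),
    ← Finset.add_sum_erase _ (fun j => d j) (Finset.mem_univ i)]
  have hsub : ∀ j ∈ Finset.univ.erase i, (d - Finsupp.single i 1 : Fin n →₀ ℕ) j = d j := by
    intro j hj
    simp [Finsupp.tsub_apply, Finsupp.single_apply, Ne.symm (Finset.ne_of_mem_erase hj)]
  rw [Finset.sum_congr rfl hsub]
  have hci : (d - Finsupp.single i 1 : Fin n →₀ ℕ) i = d i - 1 := by
    simp [Finsupp.tsub_apply, Finsupp.single_eq_same]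
  rw [hci]
  have he : (Finset.univ.erase i).sum ⇑d = ∑ x ∈ Finset.univ.erase i, d x := rfl
  omega

lemma isHomog_pderiv {P : MvPolynomial (Fin n) ℝ} {m : ℕ} (i : Fin n) (h : P.IsHomogeneous m) :
    (pderiv i P).IsHomogeneous (m - 1) := by
  have hP := P.support_sum_monomial_coeff
  rw [← hP, map_sum]
  apply IsHomogeneous.sum
  intro d hd
  rw [pderiv_monomial]
  by_cases hdi : d i = 0
  · simp only [hdi, Nat.cast_zero, mul_zero]
    rw [map_zero]
    exact isHomogeneous_zero _ _ _
  · apply isHomogeneous_monomial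
    rw [degree_sub_single d i hdi, homog_degree h hd]

lemma isHomog_lapP {P : MvPolynomial (Fin n) ℝ} {m : ℕ} (h : P.IsHomogeneous m) :
    (lapP P).IsHomogeneous (m - 2) := by
  apply IsHomogeneous.sum
  intro i _
  have h2 := isHomog_pderiv i (isHomog_pderiv i h)
  simpa [Nat.sub_sub] using h2

lemma eval_neg_homog {P : MvPolynomial (Fin n) ℝ} {m : ℕ} (h : P.IsHomogeneous m)
    (g : Fin n → ℝ) :
    eval (fun i => -(g i)) P = (-1 : ℝ) ^ m * eval g P := by
  conv_lhs => rw [← P.support_sum_monomial_coeff]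
  conv_rhs => rw [← P.support_sum_monomial_coeff]
  rw [map_sum, map_sum, Finset.mul_sum]
  refine Finset.sum_congr rfl fun d hd => ?_
  rw [eval_monomial, eval_monomial, Finsupp.prod_fintype _ _ (fun _ => pow_zero _),
    Finsupp.prod_fintype _ _ (fun _ => pow_zero _)]
  have hrw : ∀ i : Fin n, (-(g i)) ^ d i = (-1 : ℝ) ^ d i * g i ^ d i := by
    intro i; rw [neg_pow]
  rw [Finset.prod_congr rfl fun i _ => hrw i, Finset.prod_mul_distrib,
    Finset.prod_pow_eq_pow_sum]
  have : ∑ i : Fin n, d i = m := by rw [← degree_eq_sum_univ, homog_degree h hd]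
  rw [this]
  ring


lemma hasFDerivAt_evalP (P : MvPolynomial (Fin n) ℝ) (x : Eucl n) :
    HasFDerivAt (fun y : Eucl n => eval (fun i => y i) P)
      (∑ i : Fin n, eval (fun j => x j) (pderiv i P) • (EuclideanSpace.proj i : Eucl n →L[ℝ] ℝ)) x := by
  induction P using MvPolynomial.induction_on with
  | C a =>
    simp only [eval_C, pderiv_C, map_zero, zero_smul, Finset.sum_const_zero]
    exact hasFDerivAt_const a x
  | add p q hp hq =>
    simp only [map_add, add_smul, Finset.sum_add_distrib]
    exact hp.add hq
  | mul_X p j hp =>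
    have hj : HasFDerivAt (fun y : Eucl n => y j)
        (EuclideanSpace.proj j : Eucl n →L[ℝ] ℝ) x :=
      (EuclideanSpace.proj j : Eucl n →L[ℝ] ℝ).hasFDerivAt
    have hmul := hp.fun_mul hj
    have heq : (fun y : Eucl n => eval (fun i => y i) (p * X j))
        = fun y : Eucl n => eval (fun i => y i) p * y j := by
      funext y; simp [eval_mul]
    rw [heq]
    refine hmul.congr_fderiv (Eq.symm ?_)
    ext v
    have hproj : ∀ (i : Fin n) (w : Eucl n), (EuclideanSpace.proj i : Eucl n →L[ℝ] ℝ) w = w i :=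
      fun _ _ => rfl
    simp only [ContinuousLinearMap.sum_apply, ContinuousLinearMap.add_apply,
      ContinuousLinearMap.smul_apply, smul_eq_mul, hproj, pderiv_mul, pderiv_X,
      map_add, map_mul, eval_X, Pi.single_apply, apply_ite (eval fun j' => x j'),
      map_one, map_zero, mul_ite, mul_one, mul_zero, ite_mul, zero_mul, add_mul,
      Finset.sum_add_distrib, Finset.sum_ite_eq, Finset.mem_univ, if_true]
    rw [Finset.mul_sum, add_comm]
    congr 1
    exact Finset.sum_congr rfl fun i _ => by ring

lemma lap_evalP (P : MvPolynomial (Fin n) ℝ) (x : Eucl n) :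
    lap (fun y : Eucl n => eval (fun i => y i) P) x = eval (fun i => x i) (lapP P) := by
  have hfd : fderiv ℝ (fun y : Eucl n => eval (fun i => y i) P)
      = fun z : Eucl n => ∑ i : Fin n, eval (fun j => z j) (pderiv i P) •
          (EuclideanSpace.proj i : Eucl n →L[ℝ] ℝ) :=
    funext fun z => (hasFDerivAt_evalP P z).fderiv
  have hΦ : HasFDerivAt (fun z : Eucl n => ∑ i : Fin n, eval (fun j => z j) (pderiv i P) •
        (EuclideanSpace.proj i : Eucl n →L[ℝ] ℝ))
      (∑ i : Fin n, (∑ l : Fin n, eval (fun j => x j) (pderiv l (pderiv i P)) •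
        (EuclideanSpace.proj l : Eucl n →L[ℝ] ℝ)).smulRight
          (EuclideanSpace.proj i : Eucl n →L[ℝ] ℝ)) x := by
    apply HasFDerivAt.fun_sum
    intro i _
    simpa using (hasFDerivAt_evalP (pderiv i P) x).fun_smul
      (hasFDerivAt_const (EuclideanSpace.proj i : Eucl n →L[ℝ] ℝ) x)
  have h2 : fderiv ℝ (fderiv ℝ (fun y : Eucl n => eval (fun i => y i) P)) x
      = ∑ i : Fin n, (∑ l : Fin n, eval (fun j => x j) (pderiv l (pderiv i P)) •
        (EuclideanSpace.proj l : Eucl n →L[ℝ] ℝ)).smulRight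
          (EuclideanSpace.proj i : Eucl n →L[ℝ] ℝ) := by
    rw [hfd]; exact hΦ.fderiv
  unfold lap
  simp only [iteratedFDeriv_two_apply, h2]
  have hsingle : ∀ (l i : Fin n), (EuclideanSpace.proj l : Eucl n →L[ℝ] ℝ)
      (EuclideanSpace.single i 1) = if l = i then 1 else 0 := by
    intro l i
    rcases eq_or_ne l i with h | h
    · simp [h]
    · simp [EuclideanSpace.single_apply, h, Ne.symm h]
  have hterm : ∀ i : Fin n,
      (∑ i' : Fin n, (∑ l : Fin n, eval (fun j => x j) (pderiv l (pderiv i' P)) •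
        (EuclideanSpace.proj l : Eucl n →L[ℝ] ℝ)).smulRight
          (EuclideanSpace.proj i' : Eucl n →L[ℝ] ℝ))
        (EuclideanSpace.single i 1) (EuclideanSpace.single i 1)
      = eval (fun j => x j) (pderiv i (pderiv i P)) := by
    intro i
    simp only [ContinuousLinearMap.sum_apply, ContinuousLinearMap.smulRight_apply,
      ContinuousLinearMap.smul_apply, smul_eq_mul, hsingle, mul_ite, mul_one, mul_zero,
      ite_mul, zero_mul, Finset.sum_ite_eq, Finset.mem_univ, if_true]
    simp
  rw [Finset.sum_congr rfl fun i _ => by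
    rw [show (![EuclideanSpace.single i 1, EuclideanSpace.single i (1:ℝ)] : Fin 2 → Eucl n) 0
        = EuclideanSpace.single i 1 from rfl,
      show (![EuclideanSpace.single i 1, EuclideanSpace.single i (1:ℝ)] : Fin 2 → Eucl n) 1
        = EuclideanSpace.single i 1 from rfl, hterm i]]
  rw [show lapP P = ∑ i : Fin n, pderiv i (pderiv i P) from rfl, map_sum]

lemma iter_lap (k : ℕ) (P : MvPolynomial (Fin n) ℝ) :
    (lap)^[k] (fun y : Eucl n => eval (fun i => y i) P)
      = fun y : Eucl n => eval (fun i => y i) ((fun Q : MvPolynomial (Fin n) ℝ => lapP Q)^[k] P) := by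
  induction k generalizing P with
  | zero => rfl
  | succ k ih =>
    rw [Function.iterate_succ_apply, Function.iterate_succ_apply,
      show lap (fun y : Eucl n => eval (fun i => y i) P)
        = fun y : Eucl n => eval (fun i => y i) (lapP P) from funext fun y => lap_evalP P y]
    exact ih (lapP P)


end Aux

open MvPolynomial

/-- A nonnegative homogeneous polynomial annihilated by `Δ^{⌊(n+1)/2⌋}` has degree
at most `n-1`. -/
theorem nonneg_polyharmonic_degree_bound (n m : ℕ)
    (H : MvPolynomial (Fin n) ℝ) (hH : H.IsHomogeneous m) (hHne : H ≠ 0)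
    (hpos : ∀ x : Fin n → ℝ, 0 ≤ MvPolynomial.eval x H)
    (hharm : ∀ x : Eucl n,
      (lap)^[(n+1)/2] (fun y : Eucl n => MvPolynomial.eval (fun i => y i) H) x = 0) :
    m ≤ n - 1 := by
  classical
  set k := (n + 1) / 2 with hk
  have hpoly : (fun Q : MvPolynomial (Fin n) ℝ => lapP Q)^[k] H = 0 := by
    apply MvPolynomial.funext
    intro g
    rw [map_zero]
    have h1 := hharm ((WithLp.equiv 2 (Fin n → ℝ)).symm g)
    rw [iter_lap] at h1
    exact h1
  have hEm : Even m := by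
    by_contra ho
    have hom : Odd m := Nat.not_even_iff_odd.mp ho
    apply hHne
    apply MvPolynomial.funext
    intro g
    rw [map_zero]
    have h1 := hpos g
    have h2 := hpos fun i => -(g i)
    rw [eval_neg_homog hH g, hom.neg_one_pow] at h2
    linarith
  by_cases hcase : m < 2 * k
  · have hm2 : m % 2 = 0 := Nat.even_iff.mp hEm
    omega
  · exfalso
    push_neg at hcase
    set s := m / 2 with hs
    have hm2 : m % 2 = 0 := Nat.even_iff.mp hEm
    have hms : m = 2 * s := by omega
    have hks : k ≤ s := by omega
    have hps : (fun Q : MvPolynomial (Fin n) ℝ => lapP Q)^[s] H = 0 := by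
      rw [show s = (s - k) + k from by omega, Function.iterate_add_apply, hpoly]
      exact Function.iterate_fixed (by simp [lapP]) _
    have chain : ∀ j, j ≤ s →
        ((fun Q : MvPolynomial (Fin n) ℝ => lapP Q)^[j] H).IsHomogeneous (m - 2 * j) ∧
        Efun ((fun Q : MvPolynomial (Fin n) ℝ => lapP Q)^[j] H)
          = (∏ t ∈ Finset.range j, (2 * ((m : ℝ) - 2 * t))) * Efun H := by
      intro j
      induction j with
      | zero =>
        intro _
        refine ⟨by simpa using hH, by simp⟩
      | succ j ih =>
        intro hj
        obtain ⟨h1, h2⟩ := ih (by omega)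
        constructor
        · rw [Function.iterate_succ_apply']
          have := isHomog_lapP h1
          have he : m - 2 * j - 2 = m - 2 * (j + 1) := by omega
          rwa [he] at this
        · rw [Function.iterate_succ_apply', Efun_lapP_of_homog h1, h2,
            Finset.prod_range_succ]
          have hcast : ((m - 2 * j : ℕ) : ℝ) = (m : ℝ) - 2 * j := by
            have : 2 * j ≤ m := by omega
            push_cast [Nat.cast_sub this]
            ring
          rw [hcast]
          ring
    obtain ⟨_, hEs⟩ := chain s le_rfl
    rw [hps, Efun_zero] at hEs
    have hprod_ne : (∏ t ∈ Finset.range s, (2 * ((m : ℝ) - 2 * t))) ≠ 0 := by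
      apply Finset.prod_ne_zero_iff.mpr
      intro t ht
      have htlt : t < s := Finset.mem_range.mp ht
      have : (t : ℝ) < (s : ℝ) := by exact_mod_cast htlt
      have hm : (m : ℝ) = 2 * s := by exact_mod_cast hms
      nlinarith
    have hE0 : Efun H = 0 := by
      rcases mul_eq_zero.mp hEs.symm with h | h
      · exact absurd h hprod_ne
      · exact h
    have hcont : Continuous fun y : Fin n → ℝ =>
        eval y H * ∏ i, Real.exp (-(y i) ^ 2) := by
      apply Continuous.mul (MvPolynomial.continuous_eval H)
      exact continuous_finset_prod _ fun i _ =>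
        Real.continuous_exp.comp ((continuous_apply i).pow 2).neg
    have hnn : ∀ y : Fin n → ℝ, 0 ≤ eval y H * ∏ i, Real.exp (-(y i) ^ 2) :=
      fun y => mul_nonneg (hpos y) (Finset.prod_nonneg fun i _ => (Real.exp_pos _).le)
    obtain ⟨y₀, hy₀⟩ : ∃ y₀ : Fin n → ℝ, eval y₀ H ≠ 0 := by
      by_contra hco
      push_neg at hco
      exact hHne (MvPolynomial.funext fun g => by simp [hco g])
    have hy₀pos : 0 < eval y₀ H * ∏ i, Real.exp (-(y₀ i) ^ 2) :=
      mul_pos (lt_of_le_of_ne (hpos y₀) (Ne.symm hy₀))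
        (Finset.prod_pos fun i _ => Real.exp_pos _)
    have hEpos : 0 < Efun H := by
      rw [show Efun H = ∫ y : Fin n → ℝ, eval y H * ∏ i, Real.exp (-(y i) ^ 2) from rfl]
      apply (integral_pos_iff_support_of_nonneg hnn (intP H)).mpr
      have hopen : IsOpen (Function.support fun y : Fin n → ℝ =>
          eval y H * ∏ i, Real.exp (-(y i) ^ 2)) := by
        have : (Function.support fun y : Fin n → ℝ =>
            eval y H * ∏ i, Real.exp (-(y i) ^ 2))
            = (fun y : Fin n → ℝ => eval y H * ∏ i, Real.exp (-(y i) ^ 2)) ⁻¹' {0}ᶜ := rfl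
        rw [this]
        exact (isOpen_compl_singleton).preimage hcont
      exact hopen.measure_pos volume ⟨y₀, hy₀pos.ne'⟩
    exact absurd hE0 hEpos.ne'

end
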